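/- Let Q = M_z + Σ_{j≥0} a_j·(d/dz)^j be an endomorphism of H = ℂ((z⁻¹)) with deg a_j ≤ −1 for all j. Then Q is a linear automorphism of H, and its inverse is again an operator of the same type with coefficients in H₋: there exist c_j ∈ z⁻¹ℂ[[z⁻¹]] (j ≥ 0), with c_0 ∈ z⁻¹ + z⁻²ℂ[[z⁻¹]], such that Q⁻¹·f = Σ_{j≥0} c_j·(d/dz)^j f for all f ∈ H. (The operator Q_W is invertible with inverse Q_W⁻¹ = z⁻¹ + ⋯ ∈ 𝒟₋.) -/

import Mathlib

noncomputable section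

/-- `H = ℂ((z⁻¹))`: formal Laurent series in `u = z⁻¹`. -/
abbrev H : Type := LaurentSeries ℂ

/-- The coefficient of `z^k` of a Laurent series in `z⁻¹`. -/
def zc (f : H) (k : ℤ) : ℂ := f.coeff (-k)

/-- `deg_z f ≤ d`: all coefficients of `z^k` with `k > d` vanish. -/
def degLE (f : H) (d : ℤ) : Prop := ∀ k : ℤ, d < k → zc f k = 0

/-- The element `z` of `H`. -/
def zH : H := HahnSeries.single (-1 : ℤ) (1 : ℂ)

/-- Multiplication by `z` as a `ℂ`-linear endomorphism of `H`. -/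
def Mz : H →ₗ[ℂ] H where
  toFun f := zH * f
  map_add' f g := mul_add zH f g
  map_smul' c f := by
    simp only [RingHom.id_apply, ← HahnSeries.single_zero_mul_eq_smul]
    ring

/-- The derivative `d/dz` as a `ℂ`-linear endomorphism of `H`. -/
def Dz : H →ₗ[ℂ] H where
  toFun f :=
    { coeff := fun n => ((1 - n : ℤ) : ℂ) * f.coeff (n - 1)
      isPWO_support' := by
        refine Set.IsPWO.mono (Set.IsPWO.image_of_monotone f.isPWO_support'
          (f := fun m : ℤ => m + 1) (fun a b hab => by dsimp only; omega)) ?_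
        intro n hn
        simp only [Function.mem_support] at hn
        refine ⟨n - 1, ?_, by ring⟩
        intro h
        exact hn (by rw [h, mul_zero]) }
  map_add' f g := by
    ext n
    simp [HahnSeries.coeff_add, mul_add]
  map_smul' c f := by
    ext n
    simp [HahnSeries.coeff_smul]
    ring

/-- `H₊ = ℂ[z]`: series with no negative powers of `z`. -/
def Hplus : Submodule ℂ H where
  carrier := {f | ∀ k : ℤ, k < 0 → zc f k = 0}
  add_mem' := by
    intro f g hf hg k hk
    simp only [Set.mem_setOf_eq, zc, HahnSeries.coeff_add] at *
    rw [hf k hk, hg k hk, add_zero]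
  zero_mem' := by intro k hk; simp [zc]
  smul_mem' := by
    intro c f hf k hk
    simp only [Set.mem_setOf_eq, zc, HahnSeries.coeff_smul] at *
    rw [hf k hk, smul_zero]

/-- `H₋ = z⁻¹ℂ[[z⁻¹]]`: series with only negative powers of `z`. -/
def Hminus : Submodule ℂ H where
  carrier := {f | ∀ k : ℤ, 0 ≤ k → zc f k = 0}
  add_mem' := by
    intro f g hf hg k hk
    simp only [Set.mem_setOf_eq, zc, HahnSeries.coeff_add] at *
    rw [hf k hk, hg k hk, add_zero]
  zero_mem' := by intro k hk; simp [zc]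
  smul_mem' := by
    intro c f hf k hk
    simp only [Set.mem_setOf_eq, zc, HahnSeries.coeff_smul] at *
    rw [hf k hk, smul_zero]

/-- The projection `π₊ : H → H₊` discarding all negative powers of `z`. -/
def piPlus : H →ₗ[ℂ] H where
  toFun f :=
    { coeff := fun n => if 0 < n then 0 else f.coeff n
      isPWO_support' := by
        refine Set.IsPWO.mono f.isPWO_support' ?_
        intro n hn
        simp only [Function.mem_support] at hn
        by_cases h : 0 < n
        · exact absurd (if_pos h) hn
        · rw [if_neg h] at hn; exact hn }
  map_add' f g := by
    ext n
    by_cases h : 0 < n <;> simp [HahnSeries.coeff_add, h]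
  map_smul' c f := by
    ext n
    by_cases h : 0 < n <;> simp [HahnSeries.coeff_smul, h]

/-- The statement that `A` is the operator `Σ_{k≥0} a_k (d/dz)^k`, where all
`deg a_k ≤ e`: partial sums converge to `A f` coefficientwise. -/
def IsOp (a : ℕ → H) (e : ℤ) (A : H →ₗ[ℂ] H) : Prop :=
  (∀ k, degLE (a k) e) ∧
  ∀ (f : H) (d : ℤ), degLE f d → ∀ N : ℕ,
    degLE (A f - ∑ k ∈ Finset.range N, a k * ((Dz ^ k) f)) (d + e - N)

/-- The operator `A` stabilizes the subspace `W`. -/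
def Stab (A : H →ₗ[ℂ] H) (W : Submodule ℂ H) : Prop := ∀ f ∈ W, A f ∈ W

/-- The big cell of the Sato Grassmannian: `π₊` restricts to a bijection of `W` onto `ℂ[z]`. -/
def BigCell (W : Submodule ℂ H) : Prop :=
  Set.BijOn piPlus (W : Set H) (Hplus : Set H)

/-- The pair `(P, Q)` belongs to `Gr_𝒟`. -/
def GrD (P Q : H →ₗ[ℂ] H) : Prop :=
  (∃ a : ℕ → H, IsOp a (-2) (P - Dz)) ∧
  (∃ b : ℕ → H, IsOp b (-1) (Q - Mz)) ∧
  P ∘ₗ Q - Q ∘ₗ P = LinearMap.id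

/-! ### Auxiliary development -/

open Finset in
lemma isPWO_of_lb (S : Set ℤ) (b : ℤ) (h : ∀ n ∈ S, b ≤ n) : S.IsPWO := by
  have h1 : S ⊆ (fun m : ℕ => b + m) '' Set.univ := by
    intro n hn
    exact ⟨(n - b).toNat, trivial, by simp only []; have := h n hn; omega⟩
  refine Set.IsPWO.mono (Set.IsPWO.image_of_monotone ?_ ?_) h1
  · exact (Set.isWF_univ_iff.2 ⟨wellFounded_lt⟩).isPWO
  · intro x y hxy; simp; omega

lemma zc_add (f g : H) (k : ℤ) : zc (f + g) k = zc f k + zc g k := rfl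
lemma zc_sub (f g : H) (k : ℤ) : zc (f - g) k = zc f k - zc g k := rfl

lemma zc_finset_sum {ι : Type*} (s : Finset ι) (f : ι → H) (k : ℤ) :
    zc (∑ i ∈ s, f i) k = ∑ i ∈ s, zc (f i) k := by
  classical
  induction s using Finset.induction with
  | empty => simp [zc]
  | @insert i s hi ih => simp [Finset.sum_insert hi, zc_add, ih]

lemma zc_zH_mul (f : H) (k : ℤ) : zc (zH * f) k = zc f (k - 1) := by
  have h1 : -k = -(k-1) + -1 := by ring
  rw [zc, h1, zH, HahnSeries.coeff_single_mul_add, one_mul, zc]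

lemma zc_Dz (f : H) (k : ℤ) : zc (Dz f) k = ((k+1 : ℤ) : ℂ) * zc f (k+1) := by
  show ((1 - (-k) : ℤ) : ℂ) * f.coeff (-k - 1) = _
  rw [zc]
  have h1 : -(k+1) = -k - 1 := by ring
  rw [h1]
  push_cast
  ring

/-- `F j k = (k+1)(k+2)⋯(k+j)`, so that `zc (Dz^j f) k = F j k * zc f (k+j)`. -/
def Fc (j : ℕ) (k : ℤ) : ℂ := ∏ r ∈ Finset.range j, ((k + r + 1 : ℤ) : ℂ)

lemma Fc_zero_eq_factorial (w : ℕ) : Fc w 0 = (w.factorial : ℂ) := by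
  induction w with
  | zero => simp [Fc]
  | succ n ih =>
    rw [Fc, Finset.prod_range_succ, ← Fc, ih, Nat.factorial_succ]
    push_cast; ring

lemma Fc_zero_ne_zero (w : ℕ) : Fc w 0 ≠ 0 := by
  rw [Fc_zero_eq_factorial]
  exact_mod_cast w.factorial_ne_zero

lemma Fc_eq_zero {j : ℕ} {w : ℤ} (h0 : 0 ≤ w) (hw : w < j) : Fc j (w - j) = 0 := by
  refine Finset.prod_eq_zero (i := j - 1 - w.toNat) ?_ ?_
  · simp only [Finset.mem_range]; omega
  · have hz : (w - j + (j - 1 - w.toNat : ℕ) + 1 : ℤ) = 0 := by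
      push_cast; omega
    rw [hz]; simp

lemma zc_Dzpow (f : H) (j : ℕ) (k : ℤ) : zc ((Dz ^ j) f) k = Fc j k * zc f (k + j) := by
  induction j generalizing f k with
  | zero => simp [Fc]
  | succ n ih =>
    have h1 : (Dz ^ (n+1)) f = (Dz ^ n) (Dz f) := by
      rw [pow_succ, Module.End.mul_apply]
    rw [h1, ih, zc_Dz]
    have h2 : Fc (n+1) k = Fc n k * ((k + n + 1 : ℤ) : ℂ) := by
      rw [Fc, Finset.prod_range_succ, ← Fc]
    rw [h2, Fc]
    have h3 : k + (n:ℤ) + 1 = k + ((n:ℕ)+1 : ℕ) := by push_cast; ring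
    rw [← h3]
    ring
lemma zc_mul_sum (f g : H) (k : ℤ) (S : Finset ℤ)
    (hS : ∀ p, zc f p ≠ 0 → zc g (k - p) ≠ 0 → p ∈ S) :
    zc (f * g) k = ∑ p ∈ S, zc f p * zc g (k - p) := by
  classical
  have hAD := HahnSeries.coeff_mul (x := f) (y := g) (a := (-k))
  set AD := Finset.addAntidiagonal f.isPWO_support' g.isPWO_support' (-k) with hADdef
  set T := S ∪ AD.image (fun ij => -ij.1) with hT
  have hmem : ∀ ij : ℤ × ℤ, ij ∈ AD ↔ f.coeff ij.1 ≠ 0 ∧ g.coeff ij.2 ≠ 0 ∧ ij.1 + ij.2 = -k := by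
    intro ij
    simp [hADdef, Finset.addAntidiagonal, Finset.mem_addAntidiagonal, HahnSeries.mem_support, and_assoc]
  have step1 : ∑ p ∈ S, zc f p * zc g (k - p) = ∑ p ∈ T, zc f p * zc g (k - p) := by
    refine Finset.sum_subset Finset.subset_union_left ?_
    intro p _ hp
    by_contra hne
    have h1 : zc f p ≠ 0 := fun h => hne (by rw [h, zero_mul])
    have h2 : zc g (k - p) ≠ 0 := fun h => hne (by rw [h, mul_zero])
    exact hp (hS p h1 h2)
  have step2 : zc (f * g) k = ∑ p ∈ AD.image (fun ij => -ij.1), zc f p * zc g (k - p) := by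
    rw [zc, hAD]
    rw [Finset.sum_image ?hinj]
    case hinj =>
      intro ij hij ij' hij' hh
      have e1 : ij.1 = ij'.1 := by simp only [neg_inj] at hh; omega
      have e2 : ij.2 = ij'.2 := by
        have := ((hmem ij).1 hij).2.2
        have := ((hmem ij').1 hij').2.2
        omega
      exact Prod.ext e1 e2
    refine Finset.sum_congr rfl ?_
    intro ij hij
    have h2 := ((hmem ij).1 hij).2.2
    have e1 : zc f (-ij.1) = f.coeff ij.1 := by rw [zc, neg_neg]
    have e2 : zc g (k - -ij.1) = g.coeff ij.2 := by
      rw [zc]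
      congr 1
      omega
    rw [e1, e2]
  have step3 : ∑ p ∈ AD.image (fun ij => -ij.1), zc f p * zc g (k - p)
      = ∑ p ∈ T, zc f p * zc g (k - p) := by
    refine Finset.sum_subset Finset.subset_union_right ?_
    intro p _ hp
    by_contra hne
    have h1 : zc f p ≠ 0 := fun h => hne (by rw [h, zero_mul])
    have h2 : zc g (k - p) ≠ 0 := fun h => hne (by rw [h, mul_zero])
    refine hp (Finset.mem_image.2 ⟨(-p, p - k), ?_, by simp⟩)
    refine (hmem _).2 ⟨?_, ?_, by omega⟩
    · rw [zc] at h1; exact h1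
    · rw [zc] at h2
      have : -(k - p) = p - k := by ring
      rw [this] at h2
      exact h2
  rw [step2, step3, step1]

lemma degLE_mul {f g : H} {d e : ℤ} (hf : degLE f d) (hg : degLE g e) :
    degLE (f * g) (d + e) := by
  intro k hk
  rw [zc_mul_sum f g k ∅ ?cov, Finset.sum_empty]
  case cov =>
    intro p h1 h2
    exfalso
    have hp1 : p ≤ d := by_contra fun h => h1 (hf p (by omega))
    have hp2 : k - p ≤ e := by_contra fun h => h2 (hg _ (by omega))
    omega

lemma degLE_Dzpow {f : H} {d : ℤ} (hf : degLE f d) (j : ℕ) : degLE ((Dz ^ j) f) (d - j) := by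
  intro k hk
  rw [zc_Dzpow]
  rw [hf (k + j) (by omega), mul_zero]

lemma degLE_mono {f : H} {d e : ℤ} (hf : degLE f d) (h : d ≤ e) : degLE f e :=
  fun k hk => hf k (by omega)

/-- The degree of `f` (top exponent of `z`), with junk value `0` for `f = 0`. -/
def topDeg (f : H) : ℤ := -f.order

lemma degLE_topDeg (f : H) : degLE f (topDeg f) := by
  intro k hk
  rw [zc]
  by_cases hf : f = 0
  · simp [hf]
  by_contra h
  have := HahnSeries.order_le_of_coeff_ne_zero h
  rw [topDeg] at hk
  omega

lemma zc_zero (k : ℤ) : zc 0 k = 0 := rfl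

lemma degLE_term {b : H} (hb : degLE b (-1)) {f : H} {d : ℤ} (hf : degLE f d) (j : ℕ) :
    degLE (b * (Dz ^ j) f) (d - 1 - j) := by
  have := degLE_mul hb (degLE_Dzpow hf j)
  refine degLE_mono this (by omega)
/-- The operator `Σ_j b_j (d/dz)^j` applied to `f`. -/
def OpFun (b : ℕ → H) (hb : ∀ j, degLE (b j) (-1)) (f : H) : H where
  coeff := fun n => ∑ j ∈ Finset.range ((topDeg f + n).toNat), (b j * ((Dz ^ j) f)).coeff n
  isPWO_support' := by
    refine isPWO_of_lb _ (1 - topDeg f) ?_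
    intro n hn
    simp only [Function.mem_support] at hn
    by_contra hlt
    refine hn (Finset.sum_eq_zero ?_)
    intro j _
    have : (b j * ((Dz ^ j) f)).coeff n = zc (b j * ((Dz ^ j) f)) (-n) := by rw [zc, neg_neg]
    rw [this]
    exact degLE_term (hb j) (degLE_topDeg f) j (-n) (by omega)

lemma zc_OpFun (b : ℕ → H) (hb : ∀ j, degLE (b j) (-1)) {f : H} {d : ℤ}
    (hf : degLE f d) (k : ℤ) (N : ℕ) (hN : d - k ≤ (N : ℤ)) :
    zc (OpFun b hb f) k = ∑ j ∈ Finset.range N, zc (b j * ((Dz ^ j) f)) k := by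
  have base : zc (OpFun b hb f) k
      = ∑ j ∈ Finset.range ((topDeg f + -k).toNat), zc (b j * ((Dz ^ j) f)) k := by
    show ∑ j ∈ Finset.range ((topDeg f + -k).toNat), (b j * ((Dz ^ j) f)).coeff (-k) = _
    exact Finset.sum_congr rfl fun j _ => rfl
  set N0 := (topDeg f + -k).toNat with hN0
  set M := max N N0 with hM
  have h1 : ∑ j ∈ Finset.range N0, zc (b j * ((Dz ^ j) f)) k
      = ∑ j ∈ Finset.range M, zc (b j * ((Dz ^ j) f)) k := by
    refine Finset.sum_subset (Finset.range_subset_range.2 (le_max_right _ _)) ?_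
    intro j _ hj
    simp only [Finset.mem_range, not_lt] at hj
    refine degLE_term (hb j) (degLE_topDeg f) j k ?_
    omega
  have h2 : ∑ j ∈ Finset.range N, zc (b j * ((Dz ^ j) f)) k
      = ∑ j ∈ Finset.range M, zc (b j * ((Dz ^ j) f)) k := by
    refine Finset.sum_subset (Finset.range_subset_range.2 (le_max_left _ _)) ?_
    intro j _ hj
    simp only [Finset.mem_range, not_lt] at hj
    refine degLE_term (hb j) hf j k ?_
    omega
  rw [base, h1, h2]

lemma degLE_OpFun (b : ℕ → H) (hb : ∀ j, degLE (b j) (-1)) {f : H} {d : ℤ}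
    (hf : degLE f d) : degLE (OpFun b hb f) (d - 1) := by
  intro k hk
  rw [zc_OpFun b hb hf k (d - k).toNat (by omega)]
  refine Finset.sum_eq_zero ?_
  intro j _
  exact degLE_term (hb j) hf j k (by omega)

/-- The operator `Σ_j b_j (d/dz)^j` as a linear endomorphism of `H`. -/
def Op (b : ℕ → H) (hb : ∀ j, degLE (b j) (-1)) : H →ₗ[ℂ] H where
  toFun := OpFun b hb
  map_add' f g := by
    ext n
    have hd : ∀ h : H, h = f ∨ h = g ∨ h = f + g →
        degLE h (max (topDeg f) (topDeg g)) := by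
      rintro h (rfl | rfl | rfl)
      · exact degLE_mono (degLE_topDeg h) (le_max_left _ _)
      · exact degLE_mono (degLE_topDeg h) (le_max_right _ _)
      · intro k hk
        rw [zc_add, degLE_mono (degLE_topDeg f) (le_max_left _ _) k hk,
          degLE_mono (degLE_topDeg g) (le_max_right _ _) k hk, add_zero]
    set d := max (topDeg f) (topDeg g)
    set N := (d + n).toNat with hN
    have key : ∀ h : H, degLE h d → (OpFun b hb h).coeff n
        = ∑ j ∈ Finset.range N, zc (b j * ((Dz ^ j) h)) (-n) := by
      intro h hh
      have : (OpFun b hb h).coeff n = zc (OpFun b hb h) (-n) := by rw [zc, neg_neg]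
      rw [this, zc_OpFun b hb hh (-n) N (by omega)]
    rw [HahnSeries.coeff_add, key _ (hd _ (Or.inr (Or.inr rfl))), key f (hd f (Or.inl rfl)),
      key g (hd g (Or.inr (Or.inl rfl))), ← Finset.sum_add_distrib]
    refine Finset.sum_congr rfl ?_
    intro j _
    rw [map_add, mul_add, zc_add]
  map_smul' r f := by
    ext n
    simp only [RingHom.id_apply]
    have hf : degLE (r • f) (topDeg f) := by
      intro k hk
      have : zc (r • f) k = r * zc f k := by rw [zc, zc, HahnSeries.coeff_smul]; rfl
      rw [this, degLE_topDeg f k hk, mul_zero]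
    set N := (topDeg f + n).toNat with hN
    have key : ∀ h : H, degLE h (topDeg f) → (OpFun b hb h).coeff n
        = ∑ j ∈ Finset.range N, zc (b j * ((Dz ^ j) h)) (-n) := by
      intro h hh
      have : (OpFun b hb h).coeff n = zc (OpFun b hb h) (-n) := by rw [zc, neg_neg]
      rw [this, zc_OpFun b hb hh (-n) N (by omega)]
    rw [HahnSeries.coeff_smul, key _ hf, key f (degLE_topDeg f), smul_eq_mul, Finset.mul_sum]
    refine Finset.sum_congr rfl ?_
    intro j _
    rw [map_smul, zc, zc, ← HahnSeries.single_zero_mul_eq_smul, mul_left_comm,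
      HahnSeries.coeff_single_zero_mul]
/-- The coefficient table of the inverse operator, defined by recursion.
`Xr a u w` is the coefficient of `z^(w-u-1)` in `c_w`. -/
def Xr (a : ℕ → H) : ℕ → ℕ → ℂ
  | u, w => (Fc w 0)⁻¹ * ((if u = 0 ∧ w = 0 then (1:ℂ) else 0)
      - ∑ j ∈ (Finset.range w).attach, Fc j.1 ((w:ℤ) - j.1) * Xr a u j.1
      - ∑ i ∈ Finset.range (u+1), ∑ t ∈ Finset.range (u+1), ∑ j ∈ Finset.range (u+1),
          if _h : i + j + t + 2 ≤ u then
            zc (a i) (-1-t) * Fc i ((w:ℤ) - u + 1 + t) *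
              (Xr a (u - (i + t + 2)) j * Fc j ((w:ℤ) - j))
          else 0)
  termination_by u w => (u, w)
  decreasing_by
  · have := j.2
    simp only [Finset.mem_range] at this
    exact Prod.Lex.right _ this
  · exact Prod.Lex.left _ _ (by omega)

/-- The coefficients of the inverse operator: `xc a j s = zc (c j) s`. -/
def xc (a : ℕ → H) (j : ℕ) (s : ℤ) : ℂ :=
  if s ≤ -1 then Xr a (((j : ℤ) - s - 1).toNat) j else 0

lemma xc_vanish (a : ℕ → H) (j : ℕ) {s : ℤ} (hs : -1 < s) : xc a j s = 0 := by
  rw [xc, if_neg (by omega)]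

lemma xc_eq_X (a : ℕ → H) {u j : ℕ} (h : j ≤ u) : xc a j ((j:ℤ) - u - 1) = Xr a u j := by
  rw [xc, if_pos (by omega)]
  congr 1
  omega

lemma xc_guard (a : ℕ → H) (u i j t : ℕ) :
    xc a j ((i:ℤ) + j + t + 1 - u)
      = if i + j + t + 2 ≤ u then Xr a (u - (i + t + 2)) j else 0 := by
  by_cases h : i + j + t + 2 ≤ u
  · rw [xc, if_pos (by push_cast; omega), if_pos h]
    congr 1
    push_cast
    omega
  · rw [xc, if_neg (by push_cast; omega), if_neg h]

/-- The symbol identity expression: should equal `1` if `u = 0` and `0` otherwise. -/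
def Ec (a : ℕ → H) (u : ℕ) (w : ℤ) : ℂ :=
  (∑ j ∈ Finset.range (u+1), xc a j ((j:ℤ) - u - 1) * Fc j (w - j))
  + ∑ i ∈ Finset.range (u+1), ∑ t ∈ Finset.range (u+1), ∑ j ∈ Finset.range (u+1),
      zc (a i) (-1-(t:ℤ)) * Fc i (w - u + 1 + t) *
        (xc a j ((i:ℤ) + j + t + 1 - u) * Fc j (w - j))

lemma Xr_eq (a : ℕ → H) (u w : ℕ) : Xr a u w
    = (Fc w 0)⁻¹ * ((if u = 0 ∧ w = 0 then (1:ℂ) else 0)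
      - ∑ j ∈ Finset.range w, Fc j ((w:ℤ) - j) * Xr a u j
      - ∑ i ∈ Finset.range (u+1), ∑ t ∈ Finset.range (u+1), ∑ j ∈ Finset.range (u+1),
          if i + j + t + 2 ≤ u then
            zc (a i) (-1-(t:ℤ)) * Fc i ((w:ℤ) - u + 1 + t) *
              (Xr a (u - (i + t + 2)) j * Fc j ((w:ℤ) - j))
          else 0) := by
  rw [Xr, Finset.sum_attach (Finset.range w) (fun j => Fc j ((w:ℤ) - j) * Xr a u j)]
  simp only [dite_eq_ite]

lemma Xr_zero_zero (a : ℕ → H) : Xr a 0 0 = 1 := by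
  rw [Xr_eq]
  norm_num [Fc]

lemma Ec_eval_nat (a : ℕ → H) (u w : ℕ) (hw : w ≤ u) :
    Ec a u (w : ℤ) = if u = 0 ∧ w = 0 then 1 else 0 := by
  rw [Ec]
  have hsecond : ∀ i ∈ Finset.range (u+1), ∀ t ∈ Finset.range (u+1), ∀ j ∈ Finset.range (u+1),
      zc (a i) (-1-(t:ℤ)) * Fc i ((w:ℤ) - u + 1 + t) *
        (xc a j ((i:ℤ) + j + t + 1 - u) * Fc j ((w:ℤ) - j))
      = (if i + j + t + 2 ≤ u then
          zc (a i) (-1-(t:ℤ)) * Fc i ((w:ℤ) - u + 1 + t) *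
            (Xr a (u - (i + t + 2)) j * Fc j ((w:ℤ) - j)) else 0) := by
    intro i _ t _ j _
    rw [xc_guard]
    by_cases h : i + j + t + 2 ≤ u
    · rw [if_pos h, if_pos h]
    · rw [if_neg h, if_neg h, zero_mul, mul_zero]
  have hfirst : ∑ j ∈ Finset.range (u+1), xc a j ((j:ℤ) - u - 1) * Fc j ((w:ℤ) - j)
      = (∑ j ∈ Finset.range w, Fc j ((w:ℤ) - j) * Xr a u j) + Xr a u w * Fc w 0 := by
    have h1 : ∑ j ∈ Finset.range (u+1), xc a j ((j:ℤ) - u - 1) * Fc j ((w:ℤ) - j)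
        = ∑ j ∈ Finset.range (w+1), xc a j ((j:ℤ) - u - 1) * Fc j ((w:ℤ) - j) := by
      refine (Finset.sum_subset (Finset.range_subset_range.2 (by omega)) ?_).symm
      intro j _ hj
      simp only [Finset.mem_range, not_lt] at hj
      rw [Fc_eq_zero (by omega) (by omega), mul_zero]
    rw [h1, Finset.sum_range_succ]
    congr 1
    · refine Finset.sum_congr rfl fun j hj => ?_
      simp only [Finset.mem_range] at hj
      rw [xc_eq_X a (by omega), mul_comm]
    · rw [xc_eq_X a hw]
      congr 2
      omega
  rw [hfirst, Finset.sum_congr rfl (fun i hi => Finset.sum_congr rfl (fun t ht =>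
    Finset.sum_congr rfl (fun j hj => hsecond i hi t ht j hj)))]
  have hX := Xr_eq a u w
  have hF := Fc_zero_ne_zero w
  rw [eq_inv_mul_iff_mul_eq₀ hF, mul_comm (Fc w 0)] at hX
  rw [hX]
  ring
open Polynomial in
lemma Fc_eval (j : ℕ) (e : ℤ) (w : ℤ) :
    Polynomial.eval ((w : ℂ)) (∏ r ∈ Finset.range j, (Polynomial.X + Polynomial.C ((e + r + 1 : ℤ) : ℂ)))
      = Fc j (w + e) := by
  rw [Polynomial.eval_prod, Fc]
  refine Finset.prod_congr rfl fun r _ => ?_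
  rw [Polynomial.eval_add, Polynomial.eval_X, Polynomial.eval_C]
  push_cast
  ring

open Polynomial in
lemma Ec_eq_delta (a : ℕ → H) (u : ℕ) (w : ℤ) :
    Ec a u w = if u = 0 then 1 else 0 := by
  by_cases hu : u = 0
  · subst hu
    rw [if_pos rfl, Ec]
    simp only [Nat.cast_zero, zero_add]
    have h1 : ∑ j ∈ Finset.range 1, xc a j ((j:ℤ) - 0 - 1) * Fc j (w - j) = 1 := by
      rw [Finset.sum_range_one]
      have : ((0:ℕ):ℤ) - 0 - 1 = (0:ℤ) - 0 - 1 := by norm_num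
      rw [this]
      have h2 : xc a 0 ((0:ℤ) - 0 - 1) = Xr a 0 0 := xc_eq_X a (le_refl 0)
      rw [h2, Xr_zero_zero]
      simp [Fc]
    have h2 : ∀ i ∈ Finset.range 1, ∀ t ∈ Finset.range 1, ∀ j ∈ Finset.range 1,
        zc (a i) (-1-(t:ℤ)) * Fc i (w - 0 + 1 + t) *
          (xc a j ((i:ℤ) + j + t + 1 - 0) * Fc j (w - j)) = 0 := by
      intro i _ t _ j _
      rw [xc_vanish a j (by push_cast; omega), zero_mul, mul_zero]
    rw [h1]
    rw [Finset.sum_congr rfl (fun i hi => Finset.sum_congr rfl (fun t ht =>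
      Finset.sum_congr rfl (fun j hj => h2 i hi t ht j hj)))]
    simp
  · rw [if_neg hu]
    set P : Polynomial ℂ :=
      (∑ j ∈ Finset.range (u+1), C (xc a j ((j:ℤ) - u - 1)) *
          ∏ r ∈ Finset.range j, (X + C ((-(j:ℤ) + r + 1 : ℤ) : ℂ)))
      + ∑ i ∈ Finset.range (u+1), ∑ t ∈ Finset.range (u+1), ∑ j ∈ Finset.range (u+1),
          C (zc (a i) (-1-(t:ℤ)) * xc a j ((i:ℤ) + j + t + 1 - u)) *
            ((∏ r ∈ Finset.range i, (X + C ((-(u:ℤ) + 1 + t + r + 1 : ℤ) : ℂ))) *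
              ∏ r ∈ Finset.range j, (X + C ((-(j:ℤ) + r + 1 : ℤ) : ℂ))) with hP
    have hEval : ∀ v : ℤ, P.eval ((v:ℤ) : ℂ) = Ec a u v := by
      intro v
      rw [hP, Ec]
      rw [Polynomial.eval_add, Polynomial.eval_finset_sum, Polynomial.eval_finset_sum]
      congr 1
      · refine Finset.sum_congr rfl fun j _ => ?_
        rw [Polynomial.eval_mul, Polynomial.eval_C, Fc_eval]
        have e2 : (v:ℤ) + (-(j:ℤ)) = v - j := by ring
        rw [e2]
      · refine Finset.sum_congr rfl fun i _ => ?_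
        rw [Polynomial.eval_finset_sum]
        refine Finset.sum_congr rfl fun t _ => ?_
        rw [Polynomial.eval_finset_sum]
        refine Finset.sum_congr rfl fun j _ => ?_
        rw [Polynomial.eval_mul, Polynomial.eval_C, Polynomial.eval_mul, Fc_eval, Fc_eval]
        have e1 : (v:ℤ) + (-(u:ℤ) + 1 + t) = v - u + 1 + t := by ring
        have e2 : (v:ℤ) + (-(j:ℤ)) = v - j := by ring
        rw [e1, e2]
        ring
    have hDeg : P.natDegree ≤ u := by
      rw [hP]
      refine le_trans (Polynomial.natDegree_add_le _ _) (max_le ?_ ?_)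
      · refine Polynomial.natDegree_sum_le_of_forall_le _ _ fun j hj => ?_
        simp only [Finset.mem_range] at hj
        refine le_trans (Polynomial.natDegree_C_mul_le _ _) (le_trans
          (Polynomial.natDegree_prod_le _ _) ?_)
        have : ∀ r ∈ Finset.range j, (X + C ((-(j:ℤ) + r + 1 : ℤ) : ℂ)).natDegree = 1 :=
          fun r _ => Polynomial.natDegree_X_add_C _
        rw [Finset.sum_congr rfl this]
        simp
        omega
      · refine Polynomial.natDegree_sum_le_of_forall_le _ _ fun i _ => ?_
        refine Polynomial.natDegree_sum_le_of_forall_le _ _ fun t _ => ?_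
        refine Polynomial.natDegree_sum_le_of_forall_le _ _ fun j _ => ?_
        by_cases hx : xc a j ((i:ℤ) + j + t + 1 - u) = 0
        · rw [hx, mul_zero, map_zero, zero_mul]
          simp
        · have hij : i + j ≤ u := by
            by_contra hc
            exact hx (xc_vanish a j (by push_cast; omega))
          refine le_trans (Polynomial.natDegree_C_mul_le _ _) (le_trans
            (Polynomial.natDegree_mul_le) ?_)
          have b1 : (∏ r ∈ Finset.range i, (X + C ((-(u:ℤ) + 1 + t + r + 1 : ℤ) : ℂ))).natDegree ≤ i := by
            refine le_trans (Polynomial.natDegree_prod_le _ _) ?_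
            have : ∀ r ∈ Finset.range i, (X + C ((-(u:ℤ) + 1 + t + r + 1 : ℤ) : ℂ)).natDegree = 1 :=
              fun r _ => Polynomial.natDegree_X_add_C _
            rw [Finset.sum_congr rfl this]
            simp
          have b2 : (∏ r ∈ Finset.range j, (X + C ((-(j:ℤ) + r + 1 : ℤ) : ℂ))).natDegree ≤ j := by
            refine le_trans (Polynomial.natDegree_prod_le _ _) ?_
            have : ∀ r ∈ Finset.range j, (X + C ((-(j:ℤ) + r + 1 : ℤ) : ℂ)).natDegree = 1 :=
              fun r _ => Polynomial.natDegree_X_add_C _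
            rw [Finset.sum_congr rfl this]
            simp
          omega
    have hZero : P = 0 := by
      refine Polynomial.eq_zero_of_natDegree_lt_card_of_eval_eq_zero P
        (f := fun m : Fin (u+1) => ((m : ℕ) : ℂ)) ?_ ?_ ?_
      · intro m m' hmm
        have : ((m:ℕ):ℂ) = ((m':ℕ):ℂ) := hmm
        exact Fin.ext (Nat.cast_injective this)
      · intro m
        show Polynomial.eval (((m:ℕ):ℂ)) P = 0
        have h1 : (((m:ℕ):ℤ) : ℂ) = ((m:ℕ):ℂ) := by push_cast; rfl
        rw [← h1, hEval ((m:ℕ):ℤ), Ec_eval_nat a u m (by omega)]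
        simp [hu]
      · rw [Fintype.card_fin]
        omega
    have := hEval w
    rw [hZero] at this
    simp at this
    exact this.symm
/-- The coefficient series of the inverse operator. -/
def cser (a : ℕ → H) (j : ℕ) : H where
  coeff := fun n => xc a j (-n)
  isPWO_support' := by
    refine isPWO_of_lb _ 1 ?_
    intro n hn
    simp only [Function.mem_support] at hn
    by_contra hlt
    exact hn (xc_vanish a j (by omega))

lemma zc_cser (a : ℕ → H) (j : ℕ) (k : ℤ) : zc (cser a j) k = xc a j k := by
  rw [zc]
  show xc a j (- - k) = _
  rw [neg_neg]

lemma degLE_cser (a : ℕ → H) (j : ℕ) : degLE (cser a j) (-1) := by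
  intro k hk
  rw [zc_cser]
  exact xc_vanish a j hk

lemma A_decomp {Q : H →ₗ[ℂ] H} {a : ℕ → H} (hQ : IsOp a (-1) (Q - Mz)) (f : H) :
    Q f = zH * f + OpFun a hQ.1 f := by
  have ha := hQ.1
  have key : ∀ k : ℤ, zc (Q f - Mz f) k = zc (OpFun a ha f) k := by
    intro k
    set d := topDeg f with hd
    set N := (d - k).toNat + 1 with hN
    have h1 := hQ.2 f d (degLE_topDeg f) N k (by omega)
    rw [zc_sub] at h1
    have h2 : zc (∑ j ∈ Finset.range N, a j * ((Dz ^ j) f)) k = zc (OpFun a ha f) k := by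
      rw [zc_finset_sum, zc_OpFun a ha (degLE_topDeg f) k N (by omega)]
    have h3 : zc ((Q - Mz) f) k = zc (Q f - Mz f) k := rfl
    rw [h3] at h1
    have := sub_eq_zero.1 h1
    rw [this, h2]
  have : Q f - Mz f = OpFun a ha f := by
    ext n
    have := key (-n)
    rw [zc, zc, neg_neg] at this
    exact this
  have hMz : Mz f = zH * f := rfl
  rw [← hMz, add_comm, ← this]
  ring
lemma Q_Op_inverse {Q : H →ₗ[ℂ] H} {a : ℕ → H} (hQ : IsOp a (-1) (Q - Mz)) (f : H) :
    Q (OpFun (cser a) (degLE_cser a) f) = f := by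
  have ha := hQ.1
  set hc := degLE_cser a with hhc
  set g := OpFun (cser a) hc f with hg
  set d := topDeg f with hd
  have hdf : degLE f d := degLE_topDeg f
  have hgd : degLE g (d - 1) := degLE_OpFun _ hc hdf
  have key : ∀ k : ℤ, zc (Q g) k = zc f k := by
    intro k
    have hsplit : zc (Q g) k = zc g (k-1) + zc (OpFun a ha g) k := by
      rw [A_decomp hQ g, zc_add, zc_zH_mul]
    by_cases hkd : d < k
    · rw [hsplit, hgd (k-1) (by omega), degLE_OpFun a ha hgd k (by omega),
        hdf k hkd, add_zero]
    -- main case : k ≤ d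
    push_neg at hkd
    set M := (d - k).toNat + 1 with hM
    set W := Finset.Icc k d with hW
    set Qs := Finset.Icc (k - d - 2) (-1 : ℤ) with hQs
    -- T1 : first piece
    have T1 : zc g (k-1) = ∑ j ∈ Finset.range M, ∑ w ∈ W,
        xc a j (k - 1 + j - w) * Fc j (w - j) * zc f w := by
      rw [hg, zc_OpFun (cser a) hc hdf (k-1) M (by omega)]
      refine Finset.sum_congr rfl fun j _ => ?_
      rw [zc_mul_sum (cser a j) ((Dz ^ j) f) (k-1) (W.image (fun w => k - 1 + (j:ℤ) - w)) ?cov]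
      case cov =>
        intro p h1 h2
        rw [zc_cser] at h1
        have hp1 : p ≤ -1 := by_contra fun hcon => h1 (xc_vanish a j (by omega))
        rw [zc_Dzpow] at h2
        have hp2 : k - 1 - p + j ≤ d := by
          by_contra hcon
          exact h2 (by rw [hdf _ (by omega), mul_zero])
        refine Finset.mem_image.2 ⟨k - 1 + j - p, Finset.mem_Icc.2 (by omega), by ring⟩
      rw [Finset.sum_image (fun w _ w' _ h => by omega)]
      refine Finset.sum_congr rfl fun w _ => ?_
      rw [zc_cser, zc_Dzpow]
      have e1 : k - 1 - (k - 1 + (j:ℤ) - w) = w - j := by ring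
      have e2 : w - (j:ℤ) + j = w := by ring
      rw [e1, e2]
      ring
    -- T2 : second piece
    have T2 : zc (OpFun a ha g) k = ∑ i ∈ Finset.range M, ∑ q ∈ Qs, ∑ j ∈ Finset.range M,
        ∑ w ∈ W, zc (a i) q * Fc i (k - q) * (xc a j (k - q + i + j - w) * Fc j (w - j))
          * zc f w := by
      rw [zc_OpFun a ha hgd k M (by omega)]
      refine Finset.sum_congr rfl fun i _ => ?_
      rw [zc_mul_sum (a i) ((Dz ^ i) g) k Qs ?cov2]
      case cov2 =>
        intro q h1 h2
        have hq1 : q ≤ -1 := by_contra fun hcon => h1 (ha i q (by omega))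
        rw [zc_Dzpow] at h2
        have hq2 : k - q + i ≤ d - 1 := by
          by_contra hcon
          exact h2 (by rw [hgd _ (by omega), mul_zero])
        exact Finset.mem_Icc.2 (by omega)
      refine Finset.sum_congr rfl fun q hq => ?_
      have hq1 : q ≤ -1 := (Finset.mem_Icc.1 hq).2
      rw [zc_Dzpow, hg, zc_OpFun (cser a) hc hdf (k - q + i) M (by omega)]
      rw [Finset.mul_sum, Finset.mul_sum]
      refine Finset.sum_congr rfl fun j _ => ?_
      rw [zc_mul_sum (cser a j) ((Dz ^ j) f) (k - q + i)
        (W.image (fun w => k - q + (i:ℤ) + j - w)) ?cov3]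
      case cov3 =>
        intro p h1 h2
        rw [zc_cser] at h1
        have hp1 : p ≤ -1 := by_contra fun hcon => h1 (xc_vanish a j (by omega))
        rw [zc_Dzpow] at h2
        have hp2 : k - q + i - p + j ≤ d := by
          by_contra hcon
          exact h2 (by rw [hdf _ (by omega), mul_zero])
        refine Finset.mem_image.2 ⟨k - q + i + j - p, Finset.mem_Icc.2 (by omega), by ring⟩
      rw [Finset.mul_sum, Finset.mul_sum, Finset.sum_image (fun w _ w' _ h => by omega)]
      refine Finset.sum_congr rfl fun w _ => ?_
      rw [zc_cser, zc_Dzpow]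
      have e1 : k - q + i - (k - q + (i:ℤ) + j - w) = w - j := by ring
      have e2 : w - (j:ℤ) + j = w := by ring
      rw [e1, e2]
      ring
    -- reorganize into a sum over w
    have T1' : zc g (k-1) = ∑ w ∈ W, (∑ j ∈ Finset.range M,
        xc a j (k - 1 + j - w) * Fc j (w - j)) * zc f w := by
      rw [T1, Finset.sum_comm]
      exact Finset.sum_congr rfl fun w _ => by rw [Finset.sum_mul]
    have T2' : zc (OpFun a ha g) k = ∑ w ∈ W, (∑ i ∈ Finset.range M, ∑ q ∈ Qs,
        ∑ j ∈ Finset.range M, zc (a i) q * Fc i (k - q)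
          * (xc a j (k - q + i + j - w) * Fc j (w - j))) * zc f w := by
      set t : ℕ → ℤ → ℕ → ℤ → ℂ := fun i q j w =>
        zc (a i) q * Fc i (k - q) * (xc a j (k - q + i + j - w) * Fc j (w - j)) * zc f w with ht
      have e1 : ∑ i ∈ Finset.range M, ∑ q ∈ Qs, ∑ j ∈ Finset.range M, ∑ w ∈ W, t i q j w
          = ∑ i ∈ Finset.range M, ∑ q ∈ Qs, ∑ w ∈ W, ∑ j ∈ Finset.range M, t i q j w :=
        Finset.sum_congr rfl fun i _ => Finset.sum_congr rfl fun q _ => Finset.sum_comm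
      have e2 : ∑ i ∈ Finset.range M, ∑ q ∈ Qs, ∑ w ∈ W, ∑ j ∈ Finset.range M, t i q j w
          = ∑ i ∈ Finset.range M, ∑ w ∈ W, ∑ q ∈ Qs, ∑ j ∈ Finset.range M, t i q j w :=
        Finset.sum_congr rfl fun i _ => Finset.sum_comm
      have e3 : ∑ i ∈ Finset.range M, ∑ w ∈ W, ∑ q ∈ Qs, ∑ j ∈ Finset.range M, t i q j w
          = ∑ w ∈ W, ∑ i ∈ Finset.range M, ∑ q ∈ Qs, ∑ j ∈ Finset.range M, t i q j w :=
        Finset.sum_comm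
      rw [T2, e1, e2, e3]
      refine Finset.sum_congr rfl fun w _ => ?_
      rw [Finset.sum_mul]
      refine Finset.sum_congr rfl fun i _ => ?_
      rw [Finset.sum_mul]
      refine Finset.sum_congr rfl fun q _ => ?_
      rw [Finset.sum_mul]
    -- identify the bracket with Ec
    have bracket : ∀ w ∈ W,
        (∑ j ∈ Finset.range M, xc a j (k - 1 + j - w) * Fc j (w - j))
        + (∑ i ∈ Finset.range M, ∑ q ∈ Qs, ∑ j ∈ Finset.range M,
            zc (a i) q * Fc i (k - q) * (xc a j (k - q + i + j - w) * Fc j (w - j)))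
        = Ec a ((w - k).toNat) w := by
      intro w hw
      have hwk : k ≤ w ∧ w ≤ d := Finset.mem_Icc.1 hw
      set u := (w - k).toNat with hu
      have huz : (u : ℤ) = w - k := by omega
      have huM : u + 1 ≤ M := by omega
      rw [Ec]
      congr 1
      -- first sums
      · rw [← Finset.sum_subset (Finset.range_subset_range.2 huM) ?van1]
        case van1 =>
          intro j _ hj
          simp only [Finset.mem_range, not_lt] at hj
          rw [xc_vanish a j (s := k - 1 + (j:ℤ) - w) (by omega), zero_mul]
        refine Finset.sum_congr rfl fun j _ => ?_
        rw [show ((j:ℤ) - u - 1) = (k - 1 + j - w) from by omega]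
      -- second sums
      · rw [← Finset.sum_subset (Finset.range_subset_range.2 huM) ?van2]
        case van2 =>
          intro i _ hi
          simp only [Finset.mem_range, not_lt] at hi
          refine Finset.sum_eq_zero fun q hq => Finset.sum_eq_zero fun j _ => ?_
          have hq1 : q ≤ -1 := (Finset.mem_Icc.1 hq).2
          rw [xc_vanish a j (s := k - q + (i:ℤ) + (j:ℤ) - w) (by omega), zero_mul, mul_zero]
        refine Finset.sum_congr rfl fun i hi => ?_
        -- shrink q-range, reindex and shrink j-range
        have hsub : Finset.Icc (-1 - (u:ℤ)) (-1) ⊆ Qs := by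
          intro q hq
          have := Finset.mem_Icc.1 hq
          exact Finset.mem_Icc.2 (by omega)
        have h1 : ∑ q ∈ Qs, ∑ j ∈ Finset.range M,
            zc (a i) q * Fc i (k - q) * (xc a j (k - q + i + j - w) * Fc j (w - j))
            = ∑ q ∈ Finset.Icc (-1 - (u:ℤ)) (-1), ∑ j ∈ Finset.range M,
            zc (a i) q * Fc i (k - q) * (xc a j (k - q + i + j - w) * Fc j (w - j)) := by
          refine (Finset.sum_subset hsub ?_).symm
          intro q hqQ hq
          have hqQ' := Finset.mem_Icc.1 hqQ
          simp only [Finset.mem_Icc] at hq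
          refine Finset.sum_eq_zero fun j _ => ?_
          have hxv : -1 < k - q + (i:ℤ) + (j:ℤ) - w := by omega
          rw [xc_vanish a j hxv, zero_mul, mul_zero]
        have h2 : ∀ q ∈ Finset.Icc (-1 - (u:ℤ)) (-1), ∑ j ∈ Finset.range M,
            zc (a i) q * Fc i (k - q) * (xc a j (k - q + i + j - w) * Fc j (w - j))
            = ∑ j ∈ Finset.range (u+1),
            zc (a i) q * Fc i (k - q) * (xc a j (k - q + i + j - w) * Fc j (w - j)) := by
          intro q hq
          simp only [Finset.mem_Icc] at hq
          refine (Finset.sum_subset (Finset.range_subset_range.2 huM) ?_).symm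
          intro j _ hj
          simp only [Finset.mem_range, not_lt] at hj
          rw [xc_vanish a j (s := k - q + (i:ℤ) + (j:ℤ) - w) (by omega), zero_mul, mul_zero]
        rw [h1, Finset.sum_congr rfl h2]
        refine Finset.sum_nbij' (i := fun (q : ℤ) => (-1 - q).toNat)
          (j := fun (t : ℕ) => -1 - (t:ℤ)) ?_ ?_ ?_ ?_ ?_
        · intro q hq
          simp only [Finset.mem_Icc] at hq
          simp only [Finset.mem_range]
          omega
        · intro t ht
          simp only [Finset.mem_range] at ht
          simp only [Finset.mem_Icc]
          omega
        · intro q hq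
          simp only [Finset.mem_Icc] at hq
          omega
        · intro t ht
          simp only [Finset.mem_range] at ht
          omega
        · intro q hq
          simp only [Finset.mem_Icc] at hq
          have hq' : (-1 - (((-1 - q).toNat : ℕ) : ℤ)) = q := by omega
          refine Finset.sum_congr rfl fun j _ => ?_
          rw [hq']
          rw [show (k - q + (i:ℤ) + j - w) = ((i:ℤ) + j + ((-1 - q).toNat:ℕ) + 1 - u) from by omega,
            show (k - q : ℤ) = (w - (u:ℤ) + 1 + ((-1 - q).toNat:ℕ)) from by omega]
      -- final evaluation
    rw [hsplit, T1', T2', ← Finset.sum_add_distrib]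
    have : ∑ w ∈ W, ((∑ j ∈ Finset.range M, xc a j (k - 1 + j - w) * Fc j (w - j)) * zc f w
        + (∑ i ∈ Finset.range M, ∑ q ∈ Qs, ∑ j ∈ Finset.range M,
            zc (a i) q * Fc i (k - q) * (xc a j (k - q + i + j - w) * Fc j (w - j))) * zc f w)
        = ∑ w ∈ W, (if w = k then zc f w else 0) := by
      refine Finset.sum_congr rfl fun w hw => ?_
      rw [← add_mul, bracket w hw, Ec_eq_delta]
      have hwk := Finset.mem_Icc.1 hw
      by_cases hwk2 : w = k
      · rw [if_pos hwk2, if_pos (by omega)]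
        simp
      · rw [if_neg hwk2, if_neg (by omega), zero_mul]
    rw [this, Finset.sum_ite_eq' W k (fun w => zc f w), if_pos (Finset.mem_Icc.2 ⟨le_refl k, hkd⟩)]
  ext n
  have := key (-n)
  rw [zc, zc, neg_neg] at this
  exact this
lemma IsOp_Op (b : ℕ → H) (hb : ∀ j, degLE (b j) (-1)) : IsOp b (-1) (Op b hb) := by
  refine ⟨hb, ?_⟩
  intro f d hf N k hk
  rw [zc_sub]
  have hOp : (Op b hb) f = OpFun b hb f := rfl
  set L := max N ((d - k).toNat) with hL
  have h1 : zc (OpFun b hb f) k = ∑ j ∈ Finset.range L, zc (b j * ((Dz ^ j) f)) k :=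
    zc_OpFun b hb hf k L (by omega)
  have h2 : zc (∑ j ∈ Finset.range N, b j * ((Dz ^ j) f)) k
      = ∑ j ∈ Finset.range L, zc (b j * ((Dz ^ j) f)) k := by
    rw [zc_finset_sum]
    refine Finset.sum_subset (Finset.range_subset_range.2 (le_max_left _ _)) ?_
    intro j _ hj
    simp only [Finset.mem_range, not_lt] at hj
    exact degLE_term (hb j) hf j k (by omega)
  rw [hOp, h1, h2, sub_self]

lemma Q_inj_zero {Q : H →ₗ[ℂ] H} {a : ℕ → H} (hQ : IsOp a (-1) (Q - Mz)) (f : H)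
    (h0 : Q f = 0) : f = 0 := by
  by_contra hne
  have hdf := degLE_topDeg f
  have hlead : zc f (topDeg f) ≠ 0 := by
    show f.coeff (-(topDeg f)) ≠ 0
    rw [topDeg, neg_neg]
    exact HahnSeries.coeff_order_eq_zero.not.2 hne
  have : zc (Q f) (topDeg f + 1) = zc f (topDeg f) := by
    rw [A_decomp hQ f, zc_add, zc_zH_mul,
      degLE_OpFun a hQ.1 hdf (topDeg f + 1) (by omega), add_zero]
    congr 1
    ring
  rw [h0] at this
  exact hlead (by rw [← this]; rfl)

theorem Q_invertible' (Q : H →ₗ[ℂ] H) (a : ℕ → H) (hQ : IsOp a (-1) (Q - Mz)) :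
    Function.Bijective Q ∧
    ∃ (c : ℕ → H) (Qinv : H →ₗ[ℂ] H),
      (∀ j, degLE (c j) (-1)) ∧ zc (c 0) (-1) = 1 ∧
      IsOp c (-1) Qinv ∧
      Qinv ∘ₗ Q = LinearMap.id ∧ Q ∘ₗ Qinv = LinearMap.id := by
  set c := cser a with hcdef
  set hc := degLE_cser a with hhc
  set Qinv := Op c hc with hQinv
  have hright : ∀ f, Q (Qinv f) = f := fun f => Q_Op_inverse hQ f
  have hinj : Function.Injective Q := by
    intro f g hfg
    have h1 : Q (f - g) = 0 := by rw [map_sub, hfg, sub_self]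
    have h2 := Q_inj_zero hQ _ h1
    rw [← sub_eq_zero]
    exact h2
  have hsurj : Function.Surjective Q := fun f => ⟨Qinv f, hright f⟩
  refine ⟨⟨hinj, hsurj⟩, c, Qinv, hc, ?_, IsOp_Op c hc, ?_, ?_⟩
  · rw [hcdef, zc_cser]
    have h1 : (-1 : ℤ) = ((0:ℕ):ℤ) - ((0:ℕ):ℤ) - 1 := by norm_num
    rw [h1, xc_eq_X a (le_refl 0), Xr_zero_zero]
  · refine LinearMap.ext fun f => ?_
    refine hinj ?_
    show Q (Qinv (Q f)) = Q (LinearMap.id f)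
    rw [hright (Q f)]
    rfl
  · refine LinearMap.ext fun f => hright f

/-- The operator `Q = M_z + Σ a_j (d/dz)^j` with `deg a_j ≤ -1` is a linear
automorphism of `H`, and its inverse is again such an operator, with coefficients
`c_j ∈ z⁻¹ℂ[[z⁻¹]]` and `c_0 ∈ z⁻¹ + z⁻²ℂ[[z⁻¹]]`. -/
theorem Q_invertible (Q : H →ₗ[ℂ] H) (a : ℕ → H) (hQ : IsOp a (-1) (Q - Mz)) :
    Function.Bijective Q ∧
    ∃ (c : ℕ → H) (Qinv : H →ₗ[ℂ] H),
      (∀ j, degLE (c j) (-1)) ∧ zc (c 0) (-1) = 1 ∧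
      IsOp c (-1) Qinv ∧
      Qinv ∘ₗ Q = LinearMap.id ∧ Q ∘ₗ Qinv = LinearMap.id := by
  exact Q_invertible' Q a hQ
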